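/- Let X be a finite graph and Y a subgraph of X obtained by deleting some edges (keeping all vertices). Then for all λ ≥ 0, F(c₁(X)*)(λ) ≤ F(c₁(Y)*)(λ), where c₁ denotes the boundary map from edge space to vertex space and F the spectral density function. -/

import Mathlib

open scoped RealInnerProductSpace

variable {V E : Type*}

noncomputable def c1 [Fintype E] [DecidableEq V] (v0 v1 : E → V) :
    EuclideanSpace ℝ E →ₗ[ℝ] EuclideanSpace ℝ V where
  toFun a := WithLp.toLp 2 (fun v =>
    (∑ e ∈ Finset.univ.filter (fun e => v1 e = v), a e)
      - (∑ e ∈ Finset.univ.filter (fun e => v0 e = v), a e))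
  map_add' a b := by
    ext v
    simp [PiLp.add_apply, Finset.sum_add_distrib]
    try ring
  map_smul' c a := by
    ext v
    simp [PiLp.smul_apply, smul_eq_mul, ← Finset.mul_sum, mul_sub]

/-- Spectral density function of a linear map of inner product spaces. -/
noncomputable def sdf {V W : Type*} [NormedAddCommGroup V] [InnerProductSpace ℝ V]
    [NormedAddCommGroup W] [InnerProductSpace ℝ W]
    (f : V →ₗ[ℝ] W) (lam : ℝ) : ℕ :=
  sSup {n : ℕ | ∃ U : Submodule ℝ V, Module.finrank ℝ U = n ∧ ∀ v ∈ U, ‖f v‖ ≤ lam * ‖v‖}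

/-- Degree of a vertex in a finite directed multigraph (loops count twice). -/
def vdeg [Fintype E] [DecidableEq V] (v0 v1 : E → V) (v : V) : ℕ :=
  (Finset.univ.filter fun e => v0 e = v).card + (Finset.univ.filter fun e => v1 e = v).card

/-- Maximal vertex degree of a finite multigraph. -/
def maxDeg [Fintype V] [Fintype E] [DecidableEq V] (v0 v1 : E → V) : ℕ :=
  Finset.univ.sup (vdeg v0 v1)

/-- The simple graph underlying a directed multigraph. -/
def supportGraph (v0 v1 : E → V) : SimpleGraph V where
  Adj u w := u ≠ w ∧ ∃ e, (v0 e = u ∧ v1 e = w) ∨ (v0 e = w ∧ v1 e = u)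
  symm := by
    constructor
    rintro u w ⟨h, e, he⟩
    exact ⟨h.symm, e, he.symm⟩
  loopless := by constructor; rintro u ⟨h, _⟩; exact h rfl

noncomputable def c1adj [Fintype E] [DecidableEq V] (v0 v1 : E → V) :
    EuclideanSpace ℝ V →ₗ[ℝ] EuclideanSpace ℝ E where
  toFun f := WithLp.toLp 2 (fun e => f (v1 e) - f (v0 e))
  map_add' a b := by ext e; simp [PiLp.add_apply]; ring
  map_smul' c a := by ext e; simp [PiLp.smul_apply, smul_eq_mul]; ring

lemma c1adj_eq [Fintype V] [Fintype E] [DecidableEq V] (v0 v1 : E → V) :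
    c1adj v0 v1 = LinearMap.adjoint (c1 v0 v1) := by
  rw [LinearMap.eq_adjoint_iff]
  intro x y
  simp only [c1adj, c1, LinearMap.coe_mk, AddHom.coe_mk, PiLp.inner_apply,
    RCLike.inner_apply, conj_trivial]
  have h1 : ∀ g : E → V, (∑ v, x v * ∑ e ∈ Finset.univ.filter (fun e => g e = v), y e)
      = ∑ e, x (g e) * y e := by
    intro g
    rw [← Finset.sum_fiberwise_of_maps_to (g := g) (fun e _ => Finset.mem_univ (g e))]
    refine Finset.sum_congr rfl fun v _ => ?_
    rw [Finset.mul_sum]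
    refine Finset.sum_congr rfl fun e he => ?_
    simp only [Finset.mem_filter] at he
    rw [he.2]
  simp only [mul_sub, sub_mul, Finset.sum_sub_distrib]
  simp_rw [mul_comm (WithLp.ofLp y _), mul_comm (∑ e ∈ _, _) (WithLp.ofLp x _)]
  rw [h1 v0, h1 v1]

lemma norm_c1adj_sub_le [Fintype V] [Fintype E] [DecidableEq V] (v0 v1 : E → V)
    (s : Finset E) (f : EuclideanSpace ℝ V) :
    ‖c1adj (fun e : {e // e ∈ s} => v0 e.1) (fun e : {e // e ∈ s} => v1 e.1) f‖
      ≤ ‖c1adj v0 v1 f‖ := by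
  rw [EuclideanSpace.norm_eq, EuclideanSpace.norm_eq]
  apply Real.sqrt_le_sqrt
  simp only [c1adj, LinearMap.coe_mk, AddHom.coe_mk]
  calc ∑ e : {e // e ∈ s}, ‖f (v1 e.1) - f (v0 e.1)‖ ^ 2
      = ∑ e ∈ s, ‖f (v1 e) - f (v0 e)‖ ^ 2 := by
        exact Finset.sum_coe_sort s (fun e => ‖f (v1 e) - f (v0 e)‖ ^ 2)
    _ ≤ ∑ e, ‖f (v1 e) - f (v0 e)‖ ^ 2 :=
        Finset.sum_le_sum_of_subset_of_nonneg (Finset.subset_univ s)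
          (fun e _ _ => by positivity)

/-- Deleting edges from a finite graph does not decrease the spectral density
function of the adjoint of the boundary map. -/
theorem sdf_adjoint_delete_edges {V E : Type*} [Fintype V] [Fintype E] [DecidableEq V]
    (v0 v1 : E → V) (s : Finset E) (lam : ℝ) (hlam : 0 ≤ lam) :
    sdf (LinearMap.adjoint (c1 v0 v1)) lam ≤
      sdf (LinearMap.adjoint
        (c1 (fun e : {e // e ∈ s} => v0 e.1) (fun e : {e // e ∈ s} => v1 e.1))) lam := by
  rw [← c1adj_eq, ← c1adj_eq]
  unfold sdf
  apply csSup_le_csSup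
  · refine ⟨Module.finrank ℝ (EuclideanSpace ℝ V), ?_⟩
    rintro n ⟨U, hU, -⟩
    exact hU ▸ U.finrank_le
  · refine ⟨0, ⊥, by simp, fun v hv => ?_⟩
    rw [Submodule.mem_bot] at hv
    simp [hv]
  · rintro n ⟨U, hU, hle⟩
    exact ⟨U, hU, fun v hv => le_trans (norm_c1adj_sub_le v0 v1 s v) (hle v hv)⟩
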